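/- arXiv:2106.14939 — 2 statements merged into one kernel-verified Lean document; each statement's English description precedes it below -/
import Mathlib

section
/- Let (y_n)_{n≥0} be a sequence of positive real numbers satisfying y_{n+1} ≤ c·b^n·y_n^{1+α} for all n ≥ 0, where b > 1 and c, α > 0. If y_0 ≤ c^{−1/α}·b^{−1/α²}, then y_n → 0 as n → ∞. -/
theorem stmt_8 (y : ℕ → ℝ) (b c α : ℝ) (hb : 1 < b) (hc : 0 < c) (hα : 0 < α)
    (hpos : ∀ n, 0 < y n)
    (hrec : ∀ n : ℕ, y (n + 1) ≤ c * b ^ (n : ℝ) * y n ^ (1 + α))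
    (h0 : y 0 ≤ c ^ (-(1 / α)) * b ^ (-(1 / α ^ 2))) :
    Filter.Tendsto y Filter.atTop (nhds 0) := by
  have hb0 : (0:ℝ) < b := lt_trans one_pos hb
  set a : ℝ := -(1 / α) with ha
  set f : ℕ → ℝ := fun n => c ^ a * b ^ (-(1 / α ^ 2) - n / α) with hf
  have hfpos : ∀ n, 0 < f n := fun n => by positivity
  have key : ∀ n, y n ≤ f n := by
    intro n
    induction n with
    | zero =>
      have : f 0 = c ^ a * b ^ (-(1 / α ^ 2)) := by
        show c ^ a * b ^ (-(1 / α ^ 2) - (0:ℕ) / α) = _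
        norm_num
      rw [this]; exact h0
    | succ n ih =>
      have h1 : y (n+1) ≤ c * b ^ (n:ℝ) * (f n) ^ (1 + α) := by
        refine le_trans (hrec n) ?_
        exact mul_le_mul_of_nonneg_left
          (Real.rpow_le_rpow (hpos n).le ih (by positivity)) (by positivity)
      refine le_trans h1 (le_of_eq ?_)
      have heq : c * b ^ (n:ℝ) * (f n) ^ (1 + α)
          = c ^ (1 + a * (1 + α)) * b ^ ((n:ℝ) + (-(1 / α ^ 2) - n / α) * (1 + α)) := by
        rw [hf]
        rw [Real.mul_rpow (by positivity) (by positivity)]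
        rw [← Real.rpow_mul hc.le, ← Real.rpow_mul hb0.le,
          Real.rpow_add hc, Real.rpow_add hb0, Real.rpow_one]
        ring
      rw [heq, hf]
      congr 1
      · congr 1
        rw [ha]
        field_simp
        ring
      · congr 1
        push_cast
        field_simp
        ring
  -- f n = C * r ^ n
  set r : ℝ := b ^ a with hr
  have hr01 : 0 < r ∧ r < 1 := by
    constructor
    · exact Real.rpow_pos_of_pos hb0 _
    · apply Real.rpow_lt_one_of_one_lt_of_neg hb
      rw [ha]
      have : 0 < 1 / α := by positivity
      linarith
  have hfeq : ∀ n : ℕ, f n = (c ^ a * b ^ (-(1 / α ^ 2))) * r ^ n := by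
    intro n
    show c ^ a * b ^ (-(1 / α ^ 2) - n / α) = c ^ a * b ^ (-(1 / α ^ 2)) * (b ^ a) ^ n
    have : b ^ (-(1 / α ^ 2) - n / α) = b ^ (-(1 / α ^ 2)) * b ^ (a * n) := by
      rw [← Real.rpow_add hb0]
      congr 1
      rw [ha]; ring
    rw [this, Real.rpow_mul hb0.le, Real.rpow_natCast]
    ring
  have hf0 : Filter.Tendsto f Filter.atTop (nhds 0) := by
    have : Filter.Tendsto (fun n : ℕ => (c ^ a * b ^ (-(1 / α ^ 2))) * r ^ n)
        Filter.atTop (nhds ((c ^ a * b ^ (-(1 / α ^ 2))) * 0)) := by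
      exact (tendsto_pow_atTop_nhds_zero_of_lt_one hr01.1.le hr01.2).const_mul _
    rw [mul_zero] at this
    exact this.congr fun n => (hfeq n).symm
  exact tendsto_of_tendsto_of_tendsto_of_le_of_le tendsto_const_nhds hf0
    (fun n => (hpos n).le) key
end

section
/- Let h be a continuous nonnegative real-valued function on the interval [0, T₀] for some T₀ > 0, and suppose there are positive numbers ε, δ, b such that h(τ) ≤ ε·h(τ)^{1+δ} + b for every τ ∈ [0, T₀]. Set s₀ = (ε(1+δ))^{−1/δ}. If ε ≤ δ^δ / ((b+δ)^δ (1+δ)^{1+δ}) and h(0) ≤ s₀, then h(τ) ≤ s₀ for every τ ∈ [0, T₀]. -/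
theorem stmt_9 (T₀ : ℝ) (hT₀ : 0 < T₀) (h : ℝ → ℝ)
    (hcont : ContinuousOn h (Set.Icc 0 T₀))
    (hnn : ∀ τ ∈ Set.Icc 0 T₀, 0 ≤ h τ)
    (ε δ b : ℝ) (hε : 0 < ε) (hδ : 0 < δ) (hb : 0 < b)
    (hbound : ∀ τ ∈ Set.Icc 0 T₀, h τ ≤ ε * h τ ^ (1 + δ) + b)
    (hsmall : ε ≤ δ ^ δ / ((b + δ) ^ δ * (1 + δ) ^ (1 + δ)))
    (hinit : h 0 ≤ (ε * (1 + δ)) ^ (-(1 / δ))) :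
    ∀ τ ∈ Set.Icc 0 T₀, h τ ≤ (ε * (1 + δ)) ^ (-(1 / δ)) := by
  set s₀ : ℝ := (ε * (1 + δ)) ^ (-(1 / δ)) with hs₀
  have hA : 0 < ε * (1 + δ) := by positivity
  have hs₀pos : 0 < s₀ := Real.rpow_pos_of_pos hA _
  -- step 1 : ε * s₀ ^ (1+δ) = s₀ / (1+δ)
  have h1 : ε * s₀ ^ (1 + δ) = s₀ / (1 + δ) := by
    have e1 : s₀ ^ (1 + δ) = (ε * (1 + δ)) ^ (-(1 / δ) * (1 + δ)) := by
      rw [hs₀, ← Real.rpow_mul hA.le]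
    rw [e1, eq_div_iff (by positivity : (1 : ℝ) + δ ≠ 0)]
    have e2 : ε * (ε * (1 + δ)) ^ (-(1 / δ) * (1 + δ)) * (1 + δ)
        = (ε * (1 + δ)) ^ (1 : ℝ) * (ε * (1 + δ)) ^ (-(1 / δ) * (1 + δ)) := by
      rw [Real.rpow_one]; ring
    rw [e2, ← Real.rpow_add hA]
    congr 1
    field_simp
    ring
  -- step 2 : (b + δ) * (1 + δ) / δ ≤ s₀
  have h2 : (b + δ) * (1 + δ) / δ ≤ s₀ := by
    have hBpos : (0 : ℝ) < δ / ((b + δ) * (1 + δ)) := by positivity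
    have e3 : ε * (1 + δ) ≤ (δ / ((b + δ) * (1 + δ))) ^ δ := by
      have e4 : (δ / ((b + δ) * (1 + δ))) ^ δ
          = δ ^ δ / ((b + δ) ^ δ * (1 + δ) ^ δ) := by
        rw [Real.div_rpow hδ.le (by positivity), Real.mul_rpow (by positivity) (by positivity)]
      have e5 : ((1 : ℝ) + δ) ^ (1 + δ) = (1 + δ) * (1 + δ) ^ δ := by
        rw [Real.rpow_add (by positivity), Real.rpow_one]
      rw [e4]
      rw [e5] at hsmall
      rw [le_div_iff₀ (by positivity)]
      have := mul_le_mul_of_nonneg_right hsmall (le_of_lt (by positivity : (0:ℝ) < 1 + δ))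
      calc ε * (1 + δ) * ((b + δ) ^ δ * (1 + δ) ^ δ)
          ≤ δ ^ δ / ((b + δ) ^ δ * ((1 + δ) * (1 + δ) ^ δ)) * (1 + δ)
            * ((b + δ) ^ δ * (1 + δ) ^ δ) := by
            apply mul_le_mul_of_nonneg_right _ (by positivity)
            exact mul_le_mul_of_nonneg_right hsmall (by positivity)
        _ = δ ^ δ := by
            field_simp
    have e6 : ((δ / ((b + δ) * (1 + δ))) ^ δ) ^ (-(1 / δ)) ≤ s₀ := by
      rw [hs₀]
      exact Real.rpow_le_rpow_of_nonpos hA e3 (neg_nonpos.mpr (by positivity))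
    calc (b + δ) * (1 + δ) / δ
        = (δ / ((b + δ) * (1 + δ))) ^ (-1 : ℝ) := by
          rw [Real.rpow_neg_one]
          field_simp
      _ = ((δ / ((b + δ) * (1 + δ))) ^ δ) ^ (-(1 / δ)) := by
          rw [← Real.rpow_mul hBpos.le]
          congr 1
          field_simp
      _ ≤ s₀ := e6
  -- key: the map s ↦ ε s^{1+δ} + b is strictly below s at s = s₀
  have hkey : ε * s₀ ^ (1 + δ) + b < s₀ := by
    rw [h1]
    have h3 : b + δ ≤ s₀ * δ / (1 + δ) := by
      rw [div_le_iff₀ hδ] at h2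
      rw [le_div_iff₀ (by positivity : (0:ℝ) < 1 + δ)]
      nlinarith
    have : s₀ / (1 + δ) + (s₀ * δ / (1 + δ)) = s₀ := by
      field_simp
    linarith
  -- trap argument
  intro τ hτ
  by_contra hlt
  push_neg at hlt
  have hsub : Set.Icc (0 : ℝ) τ ⊆ Set.Icc 0 T₀ := Set.Icc_subset_Icc le_rfl hτ.2
  obtain ⟨σ, hσ, hhσ⟩ := intermediate_value_Icc hτ.1 (hcont.mono hsub) ⟨hinit, hlt.le⟩
  have := hbound σ (hsub hσ)
  rw [hhσ] at this
  linarith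
end
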